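/- Let q be a prime power, m a positive integer, and k_1, ..., k_m positive integers with ∑_{i=1}^m (k_i − 1) ≤ q. Fix a basis a_1, ..., a_m of F_{q^m} over F_q and let ψ(x) = ∑_{j=1}^m a_j x_j. Then for every polynomial φ ∈ F_q[x_1, ..., x_m] whose degree in x_i is at most k_i − 1 for every i, there exists a univariate polynomial f ∈ F_{q^m}[X] of degree at most (∑_{i=1}^m (k_i − 1))·q^{m−1} such that for every x ∈ F_q^m, f(ψ(x)) equals the image of φ(x) under the embedding F_q → F_{q^m}. Consequently, the coordinatewise embedding of every codeword of PRS_{q,m}(q^m, k_1, ..., k_m) is a codeword of the Reed-Solomon code RS_{q^m}(q^m, (∑_{i=1}^m (k_i − 1))·q^{m−1}) with evaluation points ψ(x), x ∈ F_q^m. -/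

import Mathlib

open Polynomial

/-- Every `F`-linear endomorphism of a finite extension `E` of a finite field `F`
is given by a linearized polynomial `y ↦ ∑ i, c i * y ^ (card F) ^ i`. -/
theorem exists_linearized {F E : Type*} [Field F] [Fintype F] [Field E] [Fintype E]
    [Algebra F E] (m : ℕ) (hrank : Module.finrank F E = m)
    (T : E →ₗ[F] E) :
    ∃ c : Fin m → E, ∀ y : E, T y = ∑ i : Fin m, c i * y ^ (Fintype.card F) ^ (i : ℕ) := by
  classical
  set q := Fintype.card F with hq
  have hq2 : 2 ≤ q := Fintype.one_lt_card
  set p := ringChar F with hpdef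
  haveI : Fact p.Prime := ⟨CharP.char_is_prime F p⟩
  haveI hcharF : CharP F p := ringChar.charP F
  haveI hcharE : CharP E p := charP_of_injective_algebraMap (algebraMap F E).injective p
  obtain ⟨s, hp, hcard⟩ := FiniteField.card F p
  -- the frobenius-power linear maps
  have hfrobadd : ∀ (i : ℕ) (x y : E), (x + y) ^ q ^ i = x ^ q ^ i + y ^ q ^ i := by
    intro i x y
    rw [hq, hcard, ← pow_mul]
    exact add_pow_char_pow x y p (↑s * i)
  have hfrobsmul : ∀ (i : ℕ) (f : F) (y : E),
      (f • y) ^ q ^ i = f • y ^ q ^ i := by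
    intro i f y
    rw [Algebra.smul_def, Algebra.smul_def, mul_pow, ← map_pow, FiniteField.pow_card_pow]
  let frob : Fin m → (E →ₗ[F] E) := fun i =>
    { toFun := fun y => y ^ q ^ (i : ℕ)
      map_add' := hfrobadd i
      map_smul' := hfrobsmul i }
  -- the big linear map
  let Φ : (Fin m → E) →ₗ[F] (E →ₗ[F] E) :=
    { toFun := fun c => ∑ i : Fin m, c i • frob i
      map_add' := by
        intro c d
        simp [add_smul, Finset.sum_add_distrib]
      map_smul' := by
        intro f c
        apply LinearMap.ext
        intro y
        simp only [RingHom.id_apply, LinearMap.sum_apply, LinearMap.smul_apply,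
          Pi.smul_apply, smul_eq_mul, Finset.smul_sum]
        exact Finset.sum_congr rfl fun i _ => by rw [smul_mul_assoc] }
  have hΦ : ∀ (c : Fin m → E) (y : E), Φ c y = ∑ i : Fin m, c i * y ^ q ^ (i : ℕ) := by
    intro c y
    simp [Φ, frob, LinearMap.sum_apply, smul_eq_mul]
  have hcardE : Fintype.card E = q ^ m := by
    rw [Module.card_eq_pow_finrank (K := F) (V := E), hrank]
  have hinj : Function.Injective Φ := by
    rw [← LinearMap.ker_eq_bot, LinearMap.ker_eq_bot']
    intro c hc
    -- consider the polynomial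
    set P : Polynomial E := ∑ i : Fin m, Polynomial.C (c i) * Polynomial.X ^ q ^ (i : ℕ) with hP
    have hPeval : ∀ y : E, P.eval y = 0 := by
      intro y
      have := congrArg (fun T : E →ₗ[F] E => T y) hc
      simp only [LinearMap.zero_apply] at this
      rw [hΦ] at this
      simpa [P, Polynomial.eval_finset_sum] using this
    have hPdeg : P.natDegree < Fintype.card E := by
      rw [hcardE]
      calc P.natDegree ≤ Finset.univ.sup (fun i : Fin m => (Polynomial.C (c i) * Polynomial.X ^ q ^ (i : ℕ)).natDegree) := Polynomial.natDegree_sum_le_of_forall_le _ _ (fun i _ => Finset.le_sup (f := fun i : Fin m => (Polynomial.C (c i) * Polynomial.X ^ q ^ (i : ℕ)).natDegree) (Finset.mem_univ i))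
        _ < q ^ m := by
            apply Finset.sup_lt_iff (by positivity) |>.2
            intro i _
            calc (Polynomial.C (c i) * Polynomial.X ^ q ^ (i : ℕ)).natDegree
                ≤ (Polynomial.X ^ q ^ (i : ℕ) : Polynomial E).natDegree := Polynomial.natDegree_C_mul_le _ _
              _ ≤ q ^ (i : ℕ) := by simp
              _ < q ^ m := Nat.pow_lt_pow_right hq2 i.isLt
    have hP0 : P = 0 :=
      Polynomial.eq_zero_of_natDegree_lt_card_of_eval_eq_zero P Function.injective_id
        (fun y => hPeval y) (by simpa using hPdeg)
    funext i
    have := congrArg (fun P => Polynomial.coeff P (q ^ (i : ℕ))) hP0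
    simp only [Polynomial.finset_sum_coeff, Polynomial.coeff_C_mul, Polynomial.coeff_X_pow,
      Polynomial.coeff_zero, P] at this
    rw [Finset.sum_eq_single i] at this
    · simpa using this
    · intro j _ hji
      have : q ^ (j : ℕ) ≠ q ^ (i : ℕ) := fun h =>
        hji (Fin.ext (Nat.pow_right_injective hq2 h))
      rw [if_neg (fun h => this h.symm), mul_zero]
    · simp
  have hsurj : Function.Surjective Φ := by
    have hd : Module.finrank F (Fin m → E) = Module.finrank F (E →ₗ[F] E) := by
      rw [Module.finrank_linearMap, Module.finrank_pi_fintype]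
      simp [hrank]
    exact (LinearMap.injective_iff_surjective_of_finrank_eq_finrank hd).1 hinj
  obtain ⟨c, hc⟩ := hsurj T
  exact ⟨c, fun y => by rw [← hc, hΦ]⟩

/-- Let `q` be a prime power, `m` a positive integer, and
`k 1, ..., k m` positive integers with `∑ i, (k i - 1) ≤ q`.  Fix a basis
`a 1, ..., a m` of `F_{q^m}` (here `E`) over `F_q` (here `F`) and let
`ψ x = ∑ j, a j * x j`.  Then for every polynomial `φ ∈ F_q[x 1, ..., x m]`
whose degree in `x i` is at most `k i - 1` for every `i`, there exists a
univariate polynomial `f ∈ F_{q^m}[X]` of degree at most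
`(∑ i, (k i - 1)) * q ^ (m - 1)` such that for every `x ∈ F_q^m`, `f (ψ x)`
equals the image of `φ x` under the embedding `F_q → F_{q^m}`.  Consequently,
the coordinatewise embedding of every codeword of
`PRS_{q,m}(q^m, k 1, ..., k m)` is a codeword of the Reed-Solomon code
`RS_{q^m}(q^m, (∑ i, (k i - 1)) * q ^ (m - 1))` with evaluation points
`ψ x`, `x ∈ F_q^m`. -/
theorem stmt_9 {F E : Type*} [Field F] [Fintype F] [Field E] [Fintype E]
    [Algebra F E] (q m : ℕ) (hq : Fintype.card F = q) (hm : 0 < m)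
    (hrank : Module.finrank F E = m)
    (k : Fin m → ℕ) (hk : ∀ i, 0 < k i) (hkq : ∑ i, (k i - 1) ≤ q)
    (a : Module.Basis (Fin m) F E)
    (φ : MvPolynomial (Fin m) F) (hφ : ∀ i, φ.degreeOf i ≤ k i - 1) :
    ∃ f : Polynomial E, f.natDegree ≤ (∑ i, (k i - 1)) * q ^ (m - 1) ∧
      ∀ x : Fin m → F,
        f.eval (∑ j, (a j : E) * algebraMap F E (x j)) =
          algebraMap F E (MvPolynomial.eval x φ) := by
  classical
  subst hq
  set q := Fintype.card F with hq
  have hq1 : 1 ≤ q := Fintype.card_pos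
  -- linearized polynomials computing the coordinates
  have hT : ∀ j : Fin m, ∃ c : Fin m → E, ∀ y : E,
      algebraMap F E (a.repr y j) = ∑ i : Fin m, c i * y ^ q ^ (i : ℕ) := by
    intro j
    obtain ⟨c, hc⟩ := exists_linearized m hrank
      ((Algebra.linearMap F E).comp (a.coord j))
    exact ⟨c, fun y => by simpa [Module.Basis.coord_apply] using hc y⟩
  choose c hc using hT
  set L : Fin m → Polynomial E := fun j => ∑ i : Fin m, C (c j i) * X ^ q ^ (i : ℕ) with hL
  have hLdeg : ∀ j, (L j).natDegree ≤ q ^ (m - 1) := by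
    intro j
    apply Polynomial.natDegree_sum_le_of_forall_le
    intro i _
    calc (C (c j i) * X ^ q ^ (i : ℕ)).natDegree
        ≤ (X ^ q ^ (i : ℕ) : Polynomial E).natDegree := Polynomial.natDegree_C_mul_le _ _
      _ ≤ q ^ (i : ℕ) := by simp
      _ ≤ q ^ (m - 1) := Nat.pow_le_pow_right hq1 (by omega)
  have hLeval : ∀ (j : Fin m) (y : E), (L j).eval y = algebraMap F E (a.repr y j) := by
    intro j y
    rw [hc j y]
    simp [hL, Polynomial.eval_finset_sum]
  refine ⟨MvPolynomial.eval₂ (Polynomial.C.comp (algebraMap F E)) L φ, ?_, ?_⟩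
  · rw [MvPolynomial.eval₂_eq]
    apply Polynomial.natDegree_sum_le_of_forall_le
    intro d hd
    calc ((Polynomial.C.comp (algebraMap F E)) (MvPolynomial.coeff d φ) *
            ∏ i ∈ d.support, L i ^ d i).natDegree
        ≤ (∏ i ∈ d.support, L i ^ d i).natDegree := Polynomial.natDegree_C_mul_le _ _
      _ ≤ ∑ i ∈ d.support, (L i ^ d i).natDegree := Polynomial.natDegree_prod_le _ _
      _ ≤ ∑ i ∈ d.support, (k i - 1) * q ^ (m - 1) := by
          apply Finset.sum_le_sum
          intro i _
          refine (Polynomial.natDegree_pow_le).trans ?_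
          exact Nat.mul_le_mul ((MvPolynomial.monomial_le_degreeOf i hd).trans (hφ i)) (hLdeg i)
      _ ≤ ∑ i, (k i - 1) * q ^ (m - 1) :=
          Finset.sum_le_sum_of_subset (Finset.subset_univ _)
      _ = (∑ i, (k i - 1)) * q ^ (m - 1) := (Finset.sum_mul _ _ _).symm
  · intro x
    have hrepr : a.repr (∑ j, (a j : E) * algebraMap F E (x j)) = x := by
      have : (∑ j, (a j : E) * algebraMap F E (x j)) = ∑ j, x j • a j := by
        refine Finset.sum_congr rfl fun j _ => ?_
        rw [Algebra.smul_def, mul_comm]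
      rw [this, a.repr_sum_self]
    rw [← Polynomial.coe_evalRingHom, MvPolynomial.eval₂_comp_left]
    have h1 : ∀ j, (Polynomial.evalRingHom (∑ j, (a j : E) * algebraMap F E (x j))) (L j)
        = algebraMap F E (x j) := by
      intro j
      rw [Polynomial.coe_evalRingHom, hLeval, hrepr]
    have h2 : MvPolynomial.eval x φ = MvPolynomial.eval₂ (RingHom.id F) x φ := by
      rw [MvPolynomial.eval]; rfl
    rw [h2, MvPolynomial.eval₂_comp_left (algebraMap F E)]
    congr 1
    · exact RingHom.ext fun r => by simp
    · funext j; exact h1 j
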